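/- The regularized kernel factor s₂(r)/r³ extends smoothly through the origin: there exists a C^∞ function g : ℝ → ℝ such that g(r) = s₂(r)/r³ for all r ≠ 0, and necessarily g(0) = 32/(3√π). -/

import Mathlib

open Real Filter Topology

/-- The error function erf(r) = (2/√π)·∫₀ʳ exp(−t²) dt. -/
noncomputable def erf (r : ℝ) : ℝ := (2 / Real.sqrt π) * ∫ t in (0 : ℝ)..r, Real.exp (-t ^ 2)

/-- The first smoothing factor s₁. -/
noncomputable def s₁ (r : ℝ) : ℝ :=
  erf r - (2 / 3) * r * (2 * r ^ 2 - 5) * Real.exp (-r ^ 2) / Real.sqrt π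

/-- The second smoothing factor s₂. -/
noncomputable def s₂ (r : ℝ) : ℝ :=
  erf r - (2 / 3) * r * (4 * r ^ 4 - 14 * r ^ 2 + 3) * Real.exp (-r ^ 2) / Real.sqrt π


section Aux
open Complex intervalIntegral MeasureTheory

noncomputable def Ff (z : ℂ) : ℂ := ∫ t in (0:ℝ)..1, Complex.exp (-(↑t * z) ^ 2)
noncomputable def Ff' (z : ℂ) : ℂ := ∫ t in (0:ℝ)..1, Complex.exp (-(↑t * z) ^ 2) * (-2 * (↑t:ℂ)^2 * z)

lemma cont_aux (x : ℂ) : Continuous fun t : ℝ => Complex.exp (-(↑t * x) ^ 2) := by fun_prop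
lemma cont_aux' (x : ℂ) : Continuous fun t : ℝ => Complex.exp (-(↑t * x) ^ 2) * (-2 * (↑t:ℂ)^2 * x) := by fun_prop


lemma Ff_add' (z : ℂ) : Ff z + z * Ff' z = Complex.exp (-z ^ 2) := by
  have hderiv : ∀ t ∈ Set.uIcc (0:ℝ) 1, HasDerivAt (fun t : ℝ => (t:ℂ) * Complex.exp (-((t:ℂ) * z) ^ 2))
      (Complex.exp (-((t:ℂ) * z) ^ 2) + (t:ℂ) * (Complex.exp (-((t:ℂ) * z) ^ 2) * (-2 * (t:ℂ) * z^2))) t := by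
    intro t _
    have hid : HasDerivAt (fun t : ℝ => ((t:ℂ))) 1 t := by
      exact (hasDerivAt_id t).ofReal_comp
    have hin : HasDerivAt (fun t : ℝ => -((t:ℂ) * z) ^ 2) (-(2 * (t:ℂ) * z^2)) t := by
      have h1 : HasDerivAt (fun t : ℝ => ((t:ℂ) * z)) z t := by simpa using hid.mul_const z
      have h2 := (h1.mul h1).neg
      have heq : (fun t : ℝ => -((t:ℂ) * z) ^ 2) = fun t : ℝ => -(((t:ℂ) * z) * ((t:ℂ) * z)) := by
        funext s; ring
      rw [heq]
      exact h2.congr_deriv (by ring)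
    have hexp := hin.cexp
    have := hid.mul hexp
    exact this.congr_deriv (by ring)
  have hFTC := intervalIntegral.integral_eq_sub_of_hasDerivAt hderiv ?_
  · have hsplit : ∫ t in (0:ℝ)..1,
        (Complex.exp (-((t:ℂ) * z) ^ 2) + (t:ℂ) * (Complex.exp (-((t:ℂ) * z) ^ 2) * (-2 * (t:ℂ) * z^2)))
        = Ff z + z * Ff' z := by
      rw [intervalIntegral.integral_add ((cont_aux z).intervalIntegrable 0 1)]
      · unfold Ff Ff'
        congr 1
        rw [← intervalIntegral.integral_const_mul]
        apply intervalIntegral.integral_congr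
        intro t _
        ring
      · have : Continuous fun t : ℝ => (t:ℂ) * (Complex.exp (-((t:ℂ) * z) ^ 2) * (-2 * (t:ℂ) * z^2)) := by
          fun_prop
        exact this.intervalIntegrable 0 1
    rw [hsplit] at hFTC
    rw [hFTC]
    norm_num
  · have : Continuous fun t : ℝ =>
        (Complex.exp (-((t:ℂ) * z) ^ 2) + (t:ℂ) * (Complex.exp (-((t:ℂ) * z) ^ 2) * (-2 * (t:ℂ) * z^2))) := by
      fun_prop
    exact this.intervalIntegrable 0 1

lemma hasDerivAt_Ff (z₀ : ℂ) : HasDerivAt Ff (Ff' z₀) z₀ := by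
  have h := intervalIntegral.hasDerivAt_integral_of_dominated_loc_of_deriv_le
    (F := fun x t => Complex.exp (-(↑t * x) ^ 2))
    (F' := fun x t => Complex.exp (-(↑t * x) ^ 2) * (-2 * (↑t:ℂ)^2 * x))
    (x₀ := z₀) (a := 0) (b := 1) (μ := MeasureTheory.volume)
    (bound := fun _ => 2 * (‖z₀‖ + 1) * Real.exp ((‖z₀‖ + 1) ^ 2))
    (Metric.ball_mem_nhds z₀ one_pos)
    (Filter.Eventually.of_forall fun x => (cont_aux x).aestronglyMeasurable.restrict)
    ((cont_aux z₀).intervalIntegrable 0 1)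
    ((cont_aux' z₀).aestronglyMeasurable.restrict)
    ?_ (intervalIntegrable_const) ?_
  · exact h.2
  · refine Filter.Eventually.of_forall fun t ht x hx => ?_
    have ht' : t ∈ Set.Ioc (0:ℝ) 1 := by
      simpa [Set.uIoc_of_le (by norm_num : (0:ℝ) ≤ 1)] using ht
    have hx' : ‖x‖ ≤ ‖z₀‖ + 1 := by
      have := mem_ball_iff_norm.mp hx
      have := norm_sub_norm_le x z₀
      linarith [mem_ball_iff_norm.mp hx]
    have ht0 : 0 ≤ t := le_of_lt ht'.1
    have ht1 : t ≤ 1 := ht'.2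
    have hz0 : (0:ℝ) ≤ ‖z₀‖ + 1 := by positivity
    rw [norm_mul]
    have h1 : ‖Complex.exp (-(↑t * x) ^ 2)‖ ≤ Real.exp ((‖z₀‖ + 1) ^ 2) := by
      rw [Complex.norm_exp]
      apply Real.exp_le_exp.mpr
      calc (-((t:ℂ) * x) ^ 2).re ≤ ‖(-((t:ℂ) * x) ^ 2)‖ := Complex.re_le_norm _
        _ = (‖((t:ℂ) * x)‖)^2 := by rw [norm_neg, norm_pow]
        _ ≤ (‖z₀‖ + 1) ^ 2 := by
            apply pow_le_pow_left₀ (by positivity)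
            rw [norm_mul]
            calc ‖(t:ℂ)‖ * ‖x‖ ≤ 1 * (‖z₀‖+1) := by
                  apply mul_le_mul _ hx' (norm_nonneg x) (by norm_num)
                  simpa [Complex.norm_real, _root_.abs_of_nonneg ht0] using ht1
              _ = ‖z₀‖ + 1 := one_mul _
    have h2 : ‖(-2 * (↑t:ℂ)^2 * x)‖ ≤ 2 * (‖z₀‖ + 1) := by
      have he : ‖(-2 * (↑t:ℂ)^2 * x)‖ = 2 * |t|^2 * ‖x‖ := by
        rw [norm_mul, norm_mul, norm_neg, norm_pow]
        norm_num [Complex.norm_real]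
      rw [he]
      have h2a : |t| ≤ 1 := by rw [_root_.abs_of_nonneg ht0]; exact ht1
      calc 2 * |t|^2 * ‖x‖ ≤ 2 * 1^2 * (‖z₀‖+1) := by
            apply mul_le_mul _ hx' (norm_nonneg x) (by norm_num)
            have := pow_le_pow_left₀ (abs_nonneg t) h2a 2
            nlinarith [abs_nonneg t]
        _ = 2 * (‖z₀‖+1) := by ring
    calc ‖Complex.exp (-(↑t * x) ^ 2)‖ * ‖(-2 * (↑t:ℂ)^2 * x)‖
        ≤ Real.exp ((‖z₀‖ + 1) ^ 2) * (2 * (‖z₀‖ + 1)) := by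
          apply mul_le_mul h1 h2 (norm_nonneg _) (by positivity)
      _ = 2 * (‖z₀‖ + 1) * Real.exp ((‖z₀‖ + 1) ^ 2) := by ring
  · refine Filter.Eventually.of_forall fun t ht x hx => ?_
    have hin : HasDerivAt (fun x : ℂ => -(↑t * x) ^ 2) (-(2 * (↑t:ℂ)^2 * x)) x := by
      have : HasDerivAt (fun x : ℂ => (↑t * x)) (↑t) x := by
        simpa using (hasDerivAt_id x).const_mul (↑t : ℂ)
      have := (this.pow 2).neg
      exact this.congr_deriv (by ring)
    have := hin.cexp
    exact this.congr_deriv (by ring)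

noncomputable def Sc (z : ℂ) : ℂ :=
  (2 / (Real.sqrt π : ℂ)) * (z * Ff z)
    - (2 / 3) * z * (4 * z ^ 4 - 14 * z ^ 2 + 3) * Complex.exp (-z ^ 2) / (Real.sqrt π : ℂ)

noncomputable def S₁c (z : ℂ) : ℂ :=
  16 / (3 * (Real.sqrt π : ℂ)) * (z ^ 6 - 6 * z ^ 4 + 6 * z ^ 2) * Complex.exp (-z ^ 2)

noncomputable def S₂c (z : ℂ) : ℂ :=
  16 / (3 * (Real.sqrt π : ℂ)) * (-2 * z ^ 7 + 18 * z ^ 5 - 36 * z ^ 3 + 12 * z) * Complex.exp (-z ^ 2)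

lemma sqrt_pi_ne : ((Real.sqrt π : ℂ)) ≠ 0 := by
  simp [Complex.ofReal_ne_zero, Real.sqrt_ne_zero', Real.pi_pos]

lemma hasDerivAt_cexp_negsq (z : ℂ) :
    HasDerivAt (fun z : ℂ => Complex.exp (-z ^ 2)) (Complex.exp (-z ^ 2) * (-(2 * z))) z := by
  have h : HasDerivAt (fun z : ℂ => -z ^ 2) (-(2 * z)) z := by
    have := (hasDerivAt_pow 2 z).neg
    simp at this
    exact this
  exact h.cexp

lemma hasDerivAt_Sc (z : ℂ) : HasDerivAt Sc (S₁c z) z := by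
  have hE : HasDerivAt (fun z : ℂ => z * Ff z) (Complex.exp (-z ^ 2)) z := by
    have h := (hasDerivAt_id z).mul (hasDerivAt_Ff z)
    rw [← Ff_add' z]
    simp at h
    exact h
  have hpoly : HasDerivAt (fun z : ℂ => (2 / 3) * z * (4 * z ^ 4 - 14 * z ^ 2 + 3))
      ((2 / 3) * (20 * z ^ 4 - 42 * z ^ 2 + 3)) z := by
    have h : HasDerivAt (fun z : ℂ => (2 / 3) * z * (4 * z ^ 4 - 14 * z ^ 2 + 3))
        ((2/3 : ℂ) * (4 * z ^ 4 - 14 * z ^ 2 + 3) + (2/3) * z * (4 * (4 * z^3) - 14 * (2 * z))) z := by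
      have h1 : HasDerivAt (fun z : ℂ => (2 / 3) * z) (2/3 : ℂ) z := by
        simpa using (hasDerivAt_id z).const_mul (2/3 : ℂ)
      have h2 : HasDerivAt (fun z : ℂ => 4 * z ^ 4 - 14 * z ^ 2 + 3)
          (4 * (4 * z^3) - 14 * (2 * z)) z := by
        have h4 : HasDerivAt (fun z : ℂ => z^4) (4 * z^3) z := by simpa using hasDerivAt_pow 4 z
        have hsq : HasDerivAt (fun z : ℂ => z^2) (2 * z) z := by simpa using hasDerivAt_pow 2 z
        exact ((h4.const_mul 4).sub (hsq.const_mul 14)).add_const 3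
      exact h1.mul h2
    convert h using 1
    ring
  have hprod := (hpoly.mul (hasDerivAt_cexp_negsq z)).div_const ((Real.sqrt π : ℂ))
  have htotal := (hE.const_mul ((2 : ℂ) / (Real.sqrt π : ℂ))).sub hprod
  refine htotal.congr_deriv ?_
  unfold S₁c
  field_simp
  ring

lemma hasDerivAt_S₁c (z : ℂ) : HasDerivAt S₁c (S₂c z) z := by
  have hpoly : HasDerivAt (fun z : ℂ => z ^ 6 - 6 * z ^ 4 + 6 * z ^ 2)
      (6 * z ^ 5 - 6 * (4 * z ^ 3) + 6 * (2 * z)) z := by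
    have h6 : HasDerivAt (fun z : ℂ => z^6) (6 * z^5) z := by simpa using hasDerivAt_pow 6 z
    have h4 : HasDerivAt (fun z : ℂ => z^4) (4 * z^3) z := by simpa using hasDerivAt_pow 4 z
    have h2 : HasDerivAt (fun z : ℂ => z^2) (2 * z) z := by simpa using hasDerivAt_pow 2 z
    exact (h6.sub (h4.const_mul 6)).add (h2.const_mul 6)
  have h := (hpoly.mul (hasDerivAt_cexp_negsq z)).const_mul (16 / (3 * (Real.sqrt π : ℂ)))
  have heq : S₁c = fun z : ℂ => 16 / (3 * (Real.sqrt π : ℂ)) *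
      ((z ^ 6 - 6 * z ^ 4 + 6 * z ^ 2) * Complex.exp (-z ^ 2)) := by
    funext w; unfold S₁c; ring
  rw [heq]
  refine h.congr_deriv ?_
  unfold S₂c
  ring

lemma hasDerivAt_S₂c_zero : HasDerivAt S₂c (64 / (Real.sqrt π : ℂ)) 0 := by
  have hpoly : HasDerivAt (fun z : ℂ => -2 * z ^ 7 + 18 * z ^ 5 - 36 * z ^ 3 + 12 * z)
      (-2 * (7 * 0 ^ 6) + 18 * (5 * 0 ^ 4) - 36 * (3 * 0 ^ 2) + 12 * 1) (0 : ℂ) := by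
    have h7 : HasDerivAt (fun z : ℂ => z^7) (7 * (0:ℂ)^6) 0 := by simpa using hasDerivAt_pow 7 (0:ℂ)
    have h5 : HasDerivAt (fun z : ℂ => z^5) (5 * (0:ℂ)^4) 0 := by simpa using hasDerivAt_pow 5 (0:ℂ)
    have h3 : HasDerivAt (fun z : ℂ => z^3) (3 * (0:ℂ)^2) 0 := by simpa using hasDerivAt_pow 3 (0:ℂ)
    have h1 : HasDerivAt (fun z : ℂ => z) (1:ℂ) 0 := hasDerivAt_id 0
    exact (((h7.const_mul (-2)).add (h5.const_mul 18)).sub (h3.const_mul 36)).add (h1.const_mul 12)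
  have h := (hpoly.mul (hasDerivAt_cexp_negsq 0)).const_mul (16 / (3 * (Real.sqrt π : ℂ)))
  have heq : S₂c = fun z : ℂ => 16 / (3 * (Real.sqrt π : ℂ)) *
      ((-2 * z ^ 7 + 18 * z ^ 5 - 36 * z ^ 3 + 12 * z) * Complex.exp (-z ^ 2)) := by
    funext w; unfold S₂c; ring
  rw [heq]
  refine h.congr_deriv ?_
  have : (16 : ℂ) / (3 * (Real.sqrt π : ℂ)) * 12 = 64 / (Real.sqrt π : ℂ) := by
    field_simp [sqrt_pi_ne]
    ring
  simp [Complex.exp_zero]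
  field_simp [sqrt_pi_ne]
  ring

lemma Sc_real (r : ℝ) : Sc (r : ℂ) = ((s₂ r : ℝ) : ℂ) := by
  have hA : Ff (r : ℂ) = ((∫ t in (0:ℝ)..1, Real.exp (-(t * r) ^ 2) : ℝ) : ℂ) := by
    unfold Ff
    rw [← intervalIntegral.integral_ofReal]
    apply intervalIntegral.integral_congr
    intro t _
    push_cast
    ring_nf
  have hB : r * ∫ t in (0:ℝ)..1, Real.exp (-(t * r) ^ 2) = ∫ t in (0:ℝ)..r, Real.exp (-t ^ 2) := by
    have := intervalIntegral.smul_integral_comp_mul_right (fun t => Real.exp (-t ^ 2)) (a := 0) (b := 1) r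
    simpa using this
  have key : ((r:ℂ)) * ((∫ t in (0:ℝ)..1, Real.exp (-(t * r) ^ 2) : ℝ) : ℂ)
      = ((∫ t in (0:ℝ)..r, Real.exp (-t ^ 2) : ℝ) : ℂ) := by
    rw [← hB]; push_cast; ring
  unfold Sc s₂ erf
  rw [hA]
  push_cast
  rw [key]

lemma Sc_diff : Differentiable ℂ Sc := fun z => (hasDerivAt_Sc z).differentiableAt

lemma deriv_Sc : deriv Sc = S₁c := funext fun z => (hasDerivAt_Sc z).deriv

lemma deriv_S₁c : deriv S₁c = S₂c := funext fun z => (hasDerivAt_S₁c z).deriv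

lemma S₁c_zero : S₁c 0 = 0 := by simp [S₁c]

lemma S₂c_zero : S₂c 0 = 0 := by simp [S₂c]

lemma Sc_zero : Sc 0 = 0 := by simp [Sc]

noncomputable def pc : FormalMultilinearSeries ℂ ℂ ℂ := cauchyPowerSeries Sc 0 ((1:NNReal) : ℝ)

lemma hpb : HasFPowerSeriesOnBall Sc pc 0 ⊤ := Sc_diff.hasFPowerSeriesOnBall 0 (R := 1) one_pos

lemma hp : HasFPowerSeriesAt Sc pc 0 := hpb.hasFPowerSeriesAt

lemma coeff_fact (n : ℕ) : (Nat.factorial n : ℂ) * pc.coeff n = iteratedDeriv n Sc 0 := by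
  rw [iteratedDeriv_eq_iteratedFDeriv]
  have h := hpb.factorial_smul (1 : ℂ) n
  rw [FormalMultilinearSeries.apply_eq_pow_smul_coeff] at h
  simpa [nsmul_eq_mul] using h

lemma coeff1 : pc.coeff 1 = 0 := by
  have h := hp.deriv
  rw [FormalMultilinearSeries.apply_eq_pow_smul_coeff] at h
  simp only [one_pow, one_smul] at h
  rw [← h, deriv_Sc, S₁c_zero]

lemma coeff2 : pc.coeff 2 = 0 := by
  have h := coeff_fact 2
  rw [iteratedDeriv_succ, iteratedDeriv_one, deriv_Sc, deriv_S₁c, S₂c_zero] at h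
  norm_num [Nat.factorial] at h
  exact h

lemma coeff3 : pc.coeff 3 = 64 / (Real.sqrt π : ℂ) / 6 := by
  have h := coeff_fact 3
  have hd : deriv S₂c 0 = 64 / (Real.sqrt π : ℂ) := hasDerivAt_S₂c_zero.deriv
  rw [iteratedDeriv_succ, iteratedDeriv_succ, iteratedDeriv_one, deriv_Sc, deriv_S₁c, hd] at h
  norm_num [Nat.factorial] at h
  rw [← h]
  ring

noncomputable def Tc : ℂ → ℂ := dslope (dslope (dslope Sc 0) 0) 0

lemma hq : HasFPowerSeriesAt Tc (FormalMultilinearSeries.fslope^[3] pc) 0 := by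
  have h := HasFPowerSeriesAt.has_fpower_series_iterate_dslope_fslope 3 hp
  have he : (Function.swap dslope 0)^[3] Sc = Tc := rfl
  rwa [he] at h

lemma Tc_zero : Tc 0 = 64 / (Real.sqrt π : ℂ) / 6 := by
  have h := hq.coeff_zero (fun _ => 1)
  have h0 : (FormalMultilinearSeries.fslope^[3] pc).coeff 0 = pc.coeff 3 := by
    rw [FormalMultilinearSeries.coeff_iterate_fslope]
  have h1 : ((FormalMultilinearSeries.fslope^[3] pc) 0 fun _ => 1)
      = (FormalMultilinearSeries.fslope^[3] pc).coeff 0 := by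
    rw [FormalMultilinearSeries.apply_eq_pow_smul_coeff]
    simp
  rw [← coeff3, ← h0, ← h1, h]

lemma dslope1_zero : dslope Sc 0 0 = 0 := by
  rw [dslope_same, deriv_Sc, S₁c_zero]

lemma dslope2_zero : dslope (dslope Sc 0) 0 0 = 0 := by
  rw [dslope_same]
  have h := (hp.has_fpower_series_dslope_fslope).deriv
  rw [FormalMultilinearSeries.apply_eq_pow_smul_coeff] at h
  simp only [one_pow, one_smul] at h
  rw [h, FormalMultilinearSeries.coeff_fslope, coeff2]

lemma Tc_ne {z : ℂ} (hz : z ≠ 0) : Tc z = Sc z / z ^ 3 := by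
  unfold Tc
  rw [dslope_of_ne _ hz, slope_def_field, dslope2_zero,
    dslope_of_ne _ hz, slope_def_field, dslope1_zero,
    dslope_of_ne _ hz, slope_def_field, Sc_zero]
  simp only [sub_zero]
  ring

lemma Tc_diff : Differentiable ℂ Tc := by
  intro z
  by_cases hz : z = 0
  · subst hz
    exact hq.analyticAt.differentiableAt
  · unfold Tc
    rw [differentiableAt_dslope_of_ne hz, differentiableAt_dslope_of_ne hz,
      differentiableAt_dslope_of_ne hz]
    exact Sc_diff z


end Aux

open Complex intervalIntegral MeasureTheory in
/-- s₂(r)/r³ extends to a C^∞ function on ℝ with value 32/(3√π) at the origin. -/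
theorem s2_div_r3_smooth_extension :
    ∃ g : ℝ → ℝ, ContDiff ℝ (⊤ : ℕ∞) g ∧ (∀ r : ℝ, r ≠ 0 → g r = s₂ r / r ^ 3) ∧
      g 0 = 32 / (3 * Real.sqrt π) := by
  refine ⟨fun r => (Tc (r : ℂ)).re, ?_, ?_, ?_⟩
  · have hT : ContDiff ℂ (⊤ : ℕ∞) Tc := Tc_diff.contDiff
    exact Complex.reCLM.contDiff.comp ((hT.restrict_scalars ℝ).comp Complex.ofRealCLM.contDiff)
  · intro r hr
    have hz : (r : ℂ) ≠ 0 := Complex.ofReal_ne_zero.mpr hr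
    show (Tc (r:ℂ)).re = s₂ r / r ^ 3
    rw [Tc_ne hz, Sc_real]
    have : ((s₂ r : ℝ) : ℂ) / (r : ℂ) ^ 3 = (((s₂ r / r ^ 3 : ℝ)) : ℂ) := by
      push_cast; ring
    rw [this, Complex.ofReal_re]
  · show (Tc ((0:ℝ):ℂ)).re = 32 / (3 * Real.sqrt π)
    rw [Complex.ofReal_zero, Tc_zero]
    have hs : Real.sqrt π ≠ 0 := by
      simp [Real.sqrt_ne_zero', Real.pi_pos]
    have : (64 : ℂ) / (Real.sqrt π : ℂ) / 6 = (((32 / (3 * Real.sqrt π) : ℝ)) : ℂ) := by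
      push_cast
      field_simp
      ring
    rw [this, Complex.ofReal_re]
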